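/- There is a universal constant C > 0 such that for every pure strategy S for G_Rad^{(n)} and every ε ∈ {−1,1}^{n×n}: ( Σ_{i,j=1}^n N(∂_{ij} Φ^{ii}_S(ε))² )^{1/2} ≤ ( Σ_{i,j=1}^n (1/4)·‖ (Id_{ℂ^k} ⊗ (W_ε − W_{ε̄^{ij}})) φ ‖² )^{1/2} + C/n, where ε̄^{ij} denotes ε with its (i,j) entry flipped and the norm on the right-hand side is the Euclidean norm on ℂ^k ⊗ ℂ^{k̃}. -/

import Mathlib

open scoped BigOperators

noncomputable section

abbrev ES (ι : Type) := EuclideanSpace ℂ ι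

def sgn (b : Bool) : ℂ := if b then 1 else -1

def sgnR (b : Bool) : ℝ := if b then 1 else -1

/-- Uniform average of a real-valued function over a finite type. -/
def Eavg {α : Type} [Fintype α] (f : α → ℝ) : ℝ := (∑ x, f x) / (Fintype.card α : ℝ)

/-- Uniform average of a vector-valued function over a finite type. -/
def EavgV {α : Type} [Fintype α] {X : Type} [AddCommGroup X] [Module ℂ X] (f : α → X) : X :=
  (Fintype.card α : ℂ)⁻¹ • ∑ x, f x

/-- The matrix of a continuous linear map between Euclidean spaces. -/
def matOf {ι κ : Type} [Fintype ι] [Fintype κ] [DecidableEq ι] (f : ES ι →L[ℂ] ES κ) :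
    Matrix κ ι ℂ := Matrix.toEuclideanLin.symm (f : ES ι →ₗ[ℂ] ES κ)

/-- The continuous linear map between Euclidean spaces given by a matrix. -/
def ofMat {ι κ : Type} [Fintype ι] [Fintype κ] [DecidableEq ι] (M : Matrix κ ι ℂ) :
    ES ι →L[ℂ] ES κ := LinearMap.toContinuousLinearMap (Matrix.toEuclideanLin M)

/-- Tensor product of two (continuous) linear maps between Euclidean spaces, realized
via the Kronecker product of their matrices. -/
def tensorCLM {ι₁ ι₂ κ₁ κ₂ : Type} [Fintype ι₁] [Fintype ι₂] [Fintype κ₁] [Fintype κ₂]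
    [DecidableEq ι₁] [DecidableEq ι₂]
    (f : ES ι₁ →L[ℂ] ES κ₁) (g : ES ι₂ →L[ℂ] ES κ₂) :
    ES (ι₁ × ι₂) →L[ℂ] ES (κ₁ × κ₂) :=
  ofMat (Matrix.kroneckerMap (· * ·) (matOf f) (matOf g))

/-- The isometry `ℂ^k → ℂ^n ⊗ ℂ^n ⊗ ℂ^k`, `x ↦ e_i ⊗ e_j ⊗ x`. -/
def embedAB {n k : ℕ} (i j : Fin n) : ES (Fin k) →L[ℂ] ES (Fin n × Fin n × Fin k) :=
  ofMat (Matrix.of fun p c => if p.1 = i ∧ p.2.1 = j ∧ p.2.2 = c then 1 else 0)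

/-- `V|ij⟩ : ℂ^k → ℂ^{k̃}`, the map `x ↦ V(e_i ⊗ e_j ⊗ x)`. -/
def Vij {n k k' : ℕ} (V : ES (Fin n × Fin n × Fin k) →L[ℂ] ES (Fin k')) (i j : Fin n) :
    ES (Fin k) →L[ℂ] ES (Fin k') := V.comp (embedAB i j)

/-- `e_i^* ⊗ Id : ℂ^n ⊗ ℂ^r → ℂ^r`. -/
def proj {n r : ℕ} (i : Fin n) : ES (Fin n × Fin r) →L[ℂ] ES (Fin r) :=
  ofMat (Matrix.of fun s p => if p.1 = i ∧ p.2 = s then 1 else 0)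

/-- A pure strategy for the game `G_Rad^{(n)}` with dimensions `k, k', r`. -/
structure PureStrategy (n k k' r : ℕ) where
  V : ES (Fin n × Fin n × Fin k) →L[ℂ] ES (Fin k')
  W : ((Fin n × Fin n) → Bool) → ES (Fin k) →L[ℂ] ES (Fin k')
  Vt : ((Fin n × Fin n) → Bool) → ES (Fin k') →L[ℂ] ES (Fin n × Fin r)
  Wt : ((Fin n × Fin n) → Bool) → ES (Fin k') →L[ℂ] ES (Fin n × Fin r)
  φ : ES (Fin k × Fin k)
  hV : ‖V‖ ≤ 1
  hW : ∀ ε, ‖W ε‖ ≤ 1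
  hVt : ∀ ε, ‖Vt ε‖ ≤ 1
  hWt : ∀ ε, ‖Wt ε‖ ≤ 1
  hφ : ‖φ‖ = 1

/-- The value `ω(S)` of a pure strategy in `G_Rad^{(n)}`. -/
def value {n k k' r : ℕ} (S : PureStrategy n k k' r) : ℝ :=
  Eavg fun ε => ‖((n : ℂ) ^ 2)⁻¹ • ∑ ij : Fin n × Fin n, sgn (ε ij) •
    (tensorCLM ((proj ij.1).comp (S.Vt ε)) ((proj ij.2).comp (S.Wt ε)))
      ((tensorCLM (Vij S.V ij.1 ij.2) (S.W ε)) S.φ)‖ ^ 2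

/-- The assignment `Φ^i_S : {−1,1}^{n×n} → B(ℂ^k ⊗ ℂ^{k̃}, ℂ^r ⊗ ℂ^r)`. -/
def PhiI {n k k' r : ℕ} (S : PureStrategy n k k' r) (ε : (Fin n × Fin n) → Bool) :
    ES (Fin k × Fin k') →L[ℂ] ES (Fin r × Fin r) :=
  ((n : ℂ) ^ 2)⁻¹ • ∑ ij : Fin n × Fin n, sgn (ε ij) •
    ((tensorCLM ((proj ij.1).comp (S.Vt ε)) ((proj ij.2).comp (S.Wt ε))).comp
      (tensorCLM (Vij S.V ij.1 ij.2) (ContinuousLinearMap.id ℂ (ES (Fin k')))))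

/-- Flip the `p`-th sign of `ε`. -/
def flipAt {ι : Type} [DecidableEq ι] (ε : ι → Bool) (p : ι) : ι → Bool :=
  Function.update ε p (!(ε p))

/-- The regularity parameter `σ_Φ` of a map on the Boolean hypercube with values in a
normed space; `‖∂_pΦ(ε)‖ = ‖Φ(ε) − Φ(ε̄^p)‖/2`. -/
def sigma {ι : Type} [Fintype ι] [DecidableEq ι] {X : Type} [NormedAddCommGroup X]
    (Φ : (ι → Bool) → X) : ℝ :=
  Real.log (Fintype.card ι) *
    Eavg fun ε => Real.sqrt (∑ p : ι, (‖Φ ε - Φ (flipAt ε p)‖ / 2) ^ 2)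

/-- The type-2 constant with `m` vectors of a normed space. -/
def T2With (m : ℕ) (X : Type) [NormedAddCommGroup X] [NormedSpace ℝ X] : ℝ :=
  sInf {T : ℝ | 0 ≤ T ∧ ∀ x : Fin m → X,
    Real.sqrt (Eavg fun ε : Fin m → Bool => ‖∑ i, sgnR (ε i) • x i‖ ^ 2)
      ≤ T * Real.sqrt (∑ i, ‖x i‖ ^ 2)}

/-- `ĥ : ℂ^n ⊗ ℂ^{k̃} → ℂ^{r'}` determined by `ĥ(e_i ⊗ y) = (e_i^* ⊗ Id)(h y)`. -/
def hat {n k' r' : ℕ} (h : ES (Fin k') →L[ℂ] ES (Fin n × Fin r')) :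
    ES (Fin n × Fin k') →L[ℂ] ES (Fin r') :=
  ofMat (Matrix.of fun s p => matOf h (p.1, s) p.2)

/-- The norm `N` on `(ℂ^n ⊗ ℂ^{k̃}) ⊗ (ℂ^n ⊗ ℂ^{k̃})`. -/
def Nnorm {n k' : ℕ} (t : ES ((Fin n × Fin k') × (Fin n × Fin k'))) : ℝ :=
  sSup {s : ℝ | ∃ (r' : ℕ) (h g : ES (Fin k') →L[ℂ] ES (Fin n × Fin r')),
    ‖h‖ ≤ 1 ∧ ‖g‖ ≤ 1 ∧ s = ‖(tensorCLM (hat h) (hat g)) t‖}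

/-- `v ↦ e_i ⊗ e_j ⊗ v`, reordered into `(ℂ^n ⊗ ℂ^{k̃}) ⊗ (ℂ^n ⊗ ℂ^{k̃})`. -/
def embedPair {n k' : ℕ} (i j : Fin n) :
    ES (Fin k' × Fin k') →L[ℂ] ES ((Fin n × Fin k') × (Fin n × Fin k')) :=
  ofMat (Matrix.of fun p q => if p.1.1 = i ∧ p.2.1 = j ∧ p.1.2 = q.1 ∧ p.2.2 = q.2 then 1 else 0)

/-- The assignment `Φ^{ii}_S : {−1,1}^{n×n} → (ℂ^n ⊗ ℂ^{k̃}) ⊗ (ℂ^n ⊗ ℂ^{k̃})`. -/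
def PhiII {n k k' r : ℕ} (S : PureStrategy n k k' r) (ε : (Fin n × Fin n) → Bool) :
    ES ((Fin n × Fin k') × (Fin n × Fin k')) :=
  ((n : ℂ) ^ 2)⁻¹ • ∑ ij : Fin n × Fin n, sgn (ε ij) •
    embedPair ij.1 ij.2 ((tensorCLM (Vij S.V ij.1 ij.2) (S.W ε)) S.φ)

section Helpers
variable {ι κ μ : Type}

lemma ofMat_apply [Fintype ι] [Fintype κ] [DecidableEq ι] (M : Matrix κ ι ℂ) (x : ES ι) (p : κ) :
    ofMat M x p = ∑ j, M p j * x j := by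
  simp [ofMat, Matrix.toEuclideanLin_apply, Matrix.mulVec, dotProduct]

lemma matOf_ofMat [Fintype ι] [Fintype κ] [DecidableEq ι] (M : Matrix κ ι ℂ) :
    matOf (ofMat M) = M := by
  simp [matOf, ofMat]

lemma ofMat_matOf [Fintype ι] [Fintype κ] [DecidableEq ι] (f : ES ι →L[ℂ] ES κ) :
    ofMat (matOf f) = f := by
  apply ContinuousLinearMap.coe_injective
  simp [matOf, ofMat]

lemma ofMat_inj [Fintype ι] [Fintype κ] [DecidableEq ι] {M N : Matrix κ ι ℂ}
    (h : ofMat M = ofMat N) : M = N := by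
  have := congrArg matOf h
  rwa [matOf_ofMat, matOf_ofMat] at this

lemma ofMat_mul [Fintype ι] [Fintype κ] [Fintype μ] [DecidableEq ι] [DecidableEq μ]
    (M : Matrix κ μ ℂ) (N : Matrix μ ι ℂ) :
    ofMat (M * N) = (ofMat M).comp (ofMat N) := by
  apply ContinuousLinearMap.coe_injective
  apply LinearMap.ext
  intro x
  apply PiLp.ext
  intro p
  show ofMat (M * N) x p = ofMat M (ofMat N x) p
  rw [ofMat_apply, ofMat_apply]
  simp only [Matrix.mul_apply, Finset.sum_mul]
  rw [Finset.sum_comm]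
  congr 1; ext l
  rw [ofMat_apply, Finset.mul_sum]
  congr 1; ext j; ring

lemma matOf_comp [Fintype ι] [Fintype κ] [Fintype μ] [DecidableEq ι] [DecidableEq μ]
    (f : ES μ →L[ℂ] ES κ) (g : ES ι →L[ℂ] ES μ) :
    matOf (f.comp g) = matOf f * matOf g := by
  apply ofMat_inj
  rw [ofMat_mul, ofMat_matOf, ofMat_matOf, ofMat_matOf]

lemma ofMat_one [Fintype ι] [DecidableEq ι] :
    ofMat (1 : Matrix ι ι ℂ) = ContinuousLinearMap.id ℂ (ES ι) := by
  apply ContinuousLinearMap.coe_injective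
  apply LinearMap.ext
  intro x
  apply PiLp.ext
  intro p
  show ofMat 1 x p = x p
  rw [ofMat_apply]
  simp [Matrix.one_apply]

lemma matOf_id [Fintype ι] [DecidableEq ι] :
    matOf (ContinuousLinearMap.id ℂ (ES ι)) = 1 := by
  apply ofMat_inj
  rw [ofMat_matOf, ofMat_one]

lemma matOf_sub [Fintype ι] [Fintype κ] [DecidableEq ι] (f g : ES ι →L[ℂ] ES κ) :
    matOf (f - g) = matOf f - matOf g := by
  unfold matOf
  rw [← map_sub]
  rfl

variable {ι₁ ι₂ κ₁ κ₂ μ₁ μ₂ : Type}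

lemma tensorCLM_comp [Fintype ι₁] [Fintype ι₂] [Fintype κ₁] [Fintype κ₂] [Fintype μ₁] [Fintype μ₂]
    [DecidableEq ι₁] [DecidableEq ι₂] [DecidableEq μ₁] [DecidableEq μ₂]
    (f₁ : ES μ₁ →L[ℂ] ES κ₁) (f₂ : ES ι₁ →L[ℂ] ES μ₁)
    (g₁ : ES μ₂ →L[ℂ] ES κ₂) (g₂ : ES ι₂ →L[ℂ] ES μ₂) :
    tensorCLM (f₁.comp f₂) (g₁.comp g₂) = (tensorCLM f₁ g₁).comp (tensorCLM f₂ g₂) := by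
  unfold tensorCLM
  rw [matOf_comp, matOf_comp, ← ofMat_mul]
  congr 1
  exact Matrix.mul_kronecker_mul (matOf f₁) (matOf f₂) (matOf g₁) (matOf g₂)

lemma tensorCLM_sub_right [Fintype ι₁] [Fintype ι₂] [Fintype κ₁] [Fintype κ₂]
    [DecidableEq ι₁] [DecidableEq ι₂]
    (f : ES ι₁ →L[ℂ] ES κ₁) (g₁ g₂ : ES ι₂ →L[ℂ] ES κ₂) :
    tensorCLM f (g₁ - g₂) = tensorCLM f g₁ - tensorCLM f g₂ := by
  apply ContinuousLinearMap.coe_injective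
  apply LinearMap.ext
  intro x
  apply PiLp.ext
  intro p
  show tensorCLM f (g₁ - g₂) x p = tensorCLM f g₁ x p - tensorCLM f g₂ x p
  unfold tensorCLM
  rw [ofMat_apply, ofMat_apply, ofMat_apply, matOf_sub, ← Finset.sum_sub_distrib]
  congr 1; ext j
  simp [Matrix.kroneckerMap_apply, Matrix.sub_apply]
  ring

lemma tensorCLM_apply [Fintype ι₁] [Fintype ι₂] [Fintype κ₁] [Fintype κ₂]
    [DecidableEq ι₁] [DecidableEq ι₂]
    (f : ES ι₁ →L[ℂ] ES κ₁) (g : ES ι₂ →L[ℂ] ES κ₂) (x : ES (ι₁ × ι₂)) (p : κ₁ × κ₂) :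
    tensorCLM f g x p = ∑ c, ∑ d, matOf f p.1 c * matOf g p.2 d * x (c, d) := by
  unfold tensorCLM
  rw [ofMat_apply, Fintype.sum_prod_type]
  simp [Matrix.kroneckerMap_apply]

lemma clm_apply_coord [Fintype ι] [Fintype κ] [DecidableEq ι]
    (f : ES ι →L[ℂ] ES κ) (x : ES ι) (p : κ) :
    f x p = ∑ c, matOf f p c * x c := by
  conv_lhs => rw [← ofMat_matOf f]
  rw [ofMat_apply]

lemma norm_sq_eq (x : ES ι) [Fintype ι] : ‖x‖ ^ 2 = ∑ i, ‖x i‖ ^ 2 := by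
  rw [EuclideanSpace.norm_eq, Real.sq_sqrt (by positivity)]

lemma norm_tensor_left_apply_le [Fintype ι₁] [Fintype ι₂] [Fintype κ₁]
    [DecidableEq ι₁] [DecidableEq ι₂]
    (f : ES ι₁ →L[ℂ] ES κ₁) (x : ES (ι₁ × ι₂)) :
    ‖tensorCLM f (ContinuousLinearMap.id ℂ (ES ι₂)) x‖ ≤ ‖f‖ * ‖x‖ := by
  set y : ι₂ → ES ι₁ := fun q => (WithLp.equiv 2 _).symm fun c => x (c, q) with hy
  have hcoord : ∀ (p : κ₁) (q : ι₂),
      tensorCLM f (ContinuousLinearMap.id ℂ (ES ι₂)) x (p, q) = f (y q) p := by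
    intro p q
    rw [tensorCLM_apply, clm_apply_coord]
    refine Finset.sum_congr rfl fun c _ => ?_
    rw [matOf_id]
    simp [Matrix.one_apply, hy]
  have hx : ∑ q, ‖y q‖ ^ 2 = ‖x‖ ^ 2 := by
    rw [norm_sq_eq x, Fintype.sum_prod_type, Finset.sum_comm]
    refine Finset.sum_congr rfl fun q _ => ?_
    rw [norm_sq_eq]
    refine Finset.sum_congr rfl fun c _ => ?_
    simp [hy]
  have hsq : ‖tensorCLM f (ContinuousLinearMap.id ℂ (ES ι₂)) x‖ ^ 2 ≤ (‖f‖ * ‖x‖) ^ 2 := by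
    rw [norm_sq_eq]
    have h1 : ∑ i : κ₁ × ι₂, ‖tensorCLM f (ContinuousLinearMap.id ℂ (ES ι₂)) x i‖ ^ 2
        = ∑ q : ι₂, ‖f (y q)‖ ^ 2 := by
      rw [Fintype.sum_prod_type, Finset.sum_comm]
      refine Finset.sum_congr rfl fun q _ => ?_
      rw [norm_sq_eq]
      refine Finset.sum_congr rfl fun p _ => ?_
      rw [hcoord]
    rw [h1]
    calc ∑ q : ι₂, ‖f (y q)‖ ^ 2 ≤ ∑ q : ι₂, ‖f‖ ^ 2 * ‖y q‖ ^ 2 := by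
          refine Finset.sum_le_sum fun q _ => ?_
          rw [← mul_pow]
          exact pow_le_pow_left₀ (norm_nonneg _) (f.le_opNorm (y q)) 2
      _ = ‖f‖ ^ 2 * ∑ q, ‖y q‖ ^ 2 := by rw [Finset.mul_sum]
      _ = (‖f‖ * ‖x‖) ^ 2 := by rw [hx, mul_pow]
  nlinarith [norm_nonneg (tensorCLM f (ContinuousLinearMap.id ℂ (ES ι₂)) x),
    mul_nonneg (norm_nonneg f) (norm_nonneg x)]

lemma norm_tensor_right_apply_le [Fintype ι₁] [Fintype ι₂] [Fintype κ₂]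
    [DecidableEq ι₁] [DecidableEq ι₂]
    (g : ES ι₂ →L[ℂ] ES κ₂) (x : ES (ι₁ × ι₂)) :
    ‖tensorCLM (ContinuousLinearMap.id ℂ (ES ι₁)) g x‖ ≤ ‖g‖ * ‖x‖ := by
  set y : ι₁ → ES ι₂ := fun c => (WithLp.equiv 2 _).symm fun d => x (c, d) with hy
  have hcoord : ∀ (p : ι₁) (q : κ₂),
      tensorCLM (ContinuousLinearMap.id ℂ (ES ι₁)) g x (p, q) = g (y p) q := by
    intro p q
    rw [tensorCLM_apply, clm_apply_coord]
    rw [matOf_id]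
    rw [Finset.sum_comm]
    refine Finset.sum_congr rfl fun d _ => ?_
    simp [Matrix.one_apply, hy]
  have hx : ∑ p, ‖y p‖ ^ 2 = ‖x‖ ^ 2 := by
    rw [norm_sq_eq x, Fintype.sum_prod_type]
    refine Finset.sum_congr rfl fun p _ => ?_
    rw [norm_sq_eq]
    refine Finset.sum_congr rfl fun d _ => ?_
    simp [hy]
  have hsq : ‖tensorCLM (ContinuousLinearMap.id ℂ (ES ι₁)) g x‖ ^ 2 ≤ (‖g‖ * ‖x‖) ^ 2 := by
    rw [norm_sq_eq]
    have h1 : ∑ i : ι₁ × κ₂, ‖tensorCLM (ContinuousLinearMap.id ℂ (ES ι₁)) g x i‖ ^ 2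
        = ∑ p : ι₁, ‖g (y p)‖ ^ 2 := by
      rw [Fintype.sum_prod_type]
      refine Finset.sum_congr rfl fun p _ => ?_
      rw [norm_sq_eq]
      refine Finset.sum_congr rfl fun q _ => ?_
      rw [hcoord]
    rw [h1]
    calc ∑ p : ι₁, ‖g (y p)‖ ^ 2 ≤ ∑ p : ι₁, ‖g‖ ^ 2 * ‖y p‖ ^ 2 := by
          refine Finset.sum_le_sum fun p _ => ?_
          rw [← mul_pow]
          exact pow_le_pow_left₀ (norm_nonneg _) (g.le_opNorm (y p)) 2
      _ = ‖g‖ ^ 2 * ∑ p, ‖y p‖ ^ 2 := by rw [Finset.mul_sum]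
      _ = (‖g‖ * ‖x‖) ^ 2 := by rw [hx, mul_pow]
  nlinarith [norm_nonneg (tensorCLM (ContinuousLinearMap.id ℂ (ES ι₁)) g x),
    mul_nonneg (norm_nonneg g) (norm_nonneg x)]

lemma opNorm_tensor_le [Fintype ι₁] [Fintype ι₂] [Fintype κ₁] [Fintype κ₂]
    [DecidableEq ι₁] [DecidableEq ι₂] [DecidableEq κ₂]
    (f : ES ι₁ →L[ℂ] ES κ₁) (g : ES ι₂ →L[ℂ] ES κ₂) :
    ‖tensorCLM f g‖ ≤ ‖f‖ * ‖g‖ := by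
  refine ContinuousLinearMap.opNorm_le_bound _ (mul_nonneg (norm_nonneg _) (norm_nonneg _)) ?_
  intro x
  have hdec : tensorCLM f g = (tensorCLM f (ContinuousLinearMap.id ℂ (ES κ₂))).comp
      (tensorCLM (ContinuousLinearMap.id ℂ (ES ι₁)) g) := by
    rw [← tensorCLM_comp, f.comp_id, g.id_comp]
  rw [hdec]
  calc ‖(tensorCLM f (ContinuousLinearMap.id ℂ (ES κ₂)))
        ((tensorCLM (ContinuousLinearMap.id ℂ (ES ι₁)) g) x)‖
      ≤ ‖f‖ * ‖(tensorCLM (ContinuousLinearMap.id ℂ (ES ι₁)) g) x‖ :=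
        norm_tensor_left_apply_le _ _
    _ ≤ ‖f‖ * (‖g‖ * ‖x‖) :=
        mul_le_mul_of_nonneg_left (norm_tensor_right_apply_le _ _) (norm_nonneg _)
    _ = ‖f‖ * ‖g‖ * ‖x‖ := by ring

lemma proj_apply {n r : ℕ} (i : Fin n) (x : ES (Fin n × Fin r)) (s : Fin r) :
    proj i x s = x (i, s) := by
  unfold proj
  rw [ofMat_apply, Fintype.sum_prod_type]
  simp [ite_and]

lemma norm_proj_le {n r : ℕ} (i : Fin n) :
    ‖(proj i : ES (Fin n × Fin r) →L[ℂ] ES (Fin r))‖ ≤ 1 := by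
  refine ContinuousLinearMap.opNorm_le_bound _ zero_le_one ?_
  intro x
  rw [one_mul]
  have hsq : ‖proj i x‖ ^ 2 ≤ ‖x‖ ^ 2 := by
    rw [norm_sq_eq, norm_sq_eq x]
    calc ∑ s, ‖proj i x s‖ ^ 2 = ∑ s, ‖x (i, s)‖ ^ 2 := by simp [proj_apply]
      _ ≤ ∑ p : Fin n × Fin r, ‖x p‖ ^ 2 := by
          rw [Fintype.sum_prod_type]
          exact Finset.single_le_sum (f := fun a => ∑ s, ‖x (a, s)‖ ^ 2)
            (fun a _ => by positivity) (Finset.mem_univ i)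
  nlinarith [norm_nonneg (proj i x), norm_nonneg x]

lemma embedAB_apply {n k : ℕ} (i j : Fin n) (x : ES (Fin k)) (p : Fin n × Fin n × Fin k) :
    embedAB i j x p = if p.1 = i ∧ p.2.1 = j then x p.2.2 else 0 := by
  unfold embedAB
  rw [ofMat_apply]
  simp [ite_and]

lemma norm_embedAB_le {n k : ℕ} (i j : Fin n) :
    ‖(embedAB i j : ES (Fin k) →L[ℂ] ES (Fin n × Fin n × Fin k))‖ ≤ 1 := by
  refine ContinuousLinearMap.opNorm_le_bound _ zero_le_one ?_
  intro x
  rw [one_mul]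
  have hsq : ‖embedAB i j x‖ ^ 2 = ‖x‖ ^ 2 := by
    rw [norm_sq_eq, norm_sq_eq x]
    simp [embedAB_apply, apply_ite, ite_and, Fintype.sum_prod_type, Finset.sum_ite_eq]
  nlinarith [norm_nonneg (embedAB i j x), norm_nonneg x]

lemma norm_Vij_le {n k k' : ℕ} (V : ES (Fin n × Fin n × Fin k) →L[ℂ] ES (Fin k'))
    (i j : Fin n) : ‖Vij V i j‖ ≤ ‖V‖ := by
  calc ‖Vij V i j‖ ≤ ‖V‖ * ‖(embedAB i j : ES (Fin k) →L[ℂ] _)‖ :=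
        ContinuousLinearMap.opNorm_comp_le _ _
    _ ≤ ‖V‖ * 1 := mul_le_mul_of_nonneg_left (norm_embedAB_le i j) (norm_nonneg V)
    _ = ‖V‖ := mul_one _

lemma matOf_hat {n k' r' : ℕ} (h : ES (Fin k') →L[ℂ] ES (Fin n × Fin r'))
    (s : Fin r') (p : Fin n × Fin k') :
    matOf (hat h) s p = matOf h (p.1, s) p.2 := by
  unfold hat
  rw [matOf_ofMat]
  rfl

lemma matOf_proj_comp {n k' r' : ℕ} (h : ES (Fin k') →L[ℂ] ES (Fin n × Fin r'))
    (i : Fin n) (s : Fin r') (y : Fin k') :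
    matOf ((proj i).comp h) s y = matOf h (i, s) y := by
  rw [matOf_comp, Matrix.mul_apply]
  rw [Finset.sum_eq_single (i, s)]
  · have : matOf (proj i : ES (Fin n × Fin r') →L[ℂ] ES (Fin r')) s (i, s) = 1 := by
      unfold proj; rw [matOf_ofMat]; simp
    rw [this, one_mul]
  · intro b _ hb
    have : matOf (proj i : ES (Fin n × Fin r') →L[ℂ] ES (Fin r')) s b = 0 := by
      unfold proj; rw [matOf_ofMat]
      simp only [Matrix.of_apply, ite_eq_right_iff]
      intro hc
      exact absurd (Prod.ext hc.1 hc.2) hb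
    rw [this, zero_mul]
  · intro hmem; exact absurd (Finset.mem_univ _) hmem

lemma hatcomp {n k' r' : ℕ} (h g : ES (Fin k') →L[ℂ] ES (Fin n × Fin r')) (i j : Fin n) :
    (tensorCLM (hat h) (hat g)).comp (embedPair i j)
      = tensorCLM ((proj i).comp h) ((proj j).comp g) := by
  unfold tensorCLM embedPair
  rw [← ofMat_mul]
  congr 1
  ext p q
  rw [Matrix.mul_apply]
  rw [Finset.sum_eq_single ((i, q.1), (j, q.2))]
  · rw [Matrix.kroneckerMap_apply, matOf_hat, matOf_hat]
    simp only [Matrix.of_apply, Matrix.kroneckerMap_apply]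
    rw [matOf_proj_comp, matOf_proj_comp]
    simp
  · intro b _ hb
    have : (Matrix.of fun (pp : (Fin n × Fin k') × (Fin n × Fin k')) (qq : Fin k' × Fin k') =>
        if pp.1.1 = i ∧ pp.2.1 = j ∧ pp.1.2 = qq.1 ∧ pp.2.2 = qq.2 then (1:ℂ) else 0) b q = 0 := by
      simp only [Matrix.of_apply, ite_eq_right_iff]
      rintro ⟨h1, h2, h3, h4⟩
      exact absurd (Prod.ext (Prod.ext h1 h3) (Prod.ext h2 h4)) hb
    rw [this, mul_zero]
  · intro hmem; exact absurd (Finset.mem_univ _) hmem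

lemma comp_norm_le_one {X Y Z : Type*} [NormedAddCommGroup X] [NormedAddCommGroup Y]
    [NormedAddCommGroup Z] [NormedSpace ℂ X] [NormedSpace ℂ Y] [NormedSpace ℂ Z]
    {A : Y →L[ℂ] Z} {B : X →L[ℂ] Y} (hA : ‖A‖ ≤ 1) (hB : ‖B‖ ≤ 1) : ‖A.comp B‖ ≤ 1 := by
  refine le_trans (ContinuousLinearMap.opNorm_comp_le _ _) ?_
  nlinarith [norm_nonneg A, norm_nonneg B]

lemma tensor_norm_le_one {ι₁ ι₂ κ₁ κ₂ : Type} [Fintype ι₁] [Fintype ι₂] [Fintype κ₁] [Fintype κ₂]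
    [DecidableEq ι₁] [DecidableEq ι₂] [DecidableEq κ₂]
    {f : ES ι₁ →L[ℂ] ES κ₁} {g : ES ι₂ →L[ℂ] ES κ₂} (hf : ‖f‖ ≤ 1) (hg : ‖g‖ ≤ 1) :
    ‖tensorCLM f g‖ ≤ 1 := by
  refine le_trans (opNorm_tensor_le f g) ?_
  nlinarith [norm_nonneg f, norm_nonneg g]

lemma core {n k k' r' : ℕ} (V : ES (Fin n × Fin n × Fin k) →L[ℂ] ES (Fin k')) (hV : ‖V‖ ≤ 1)
    (h g : ES (Fin k') →L[ℂ] ES (Fin n × Fin r')) (hh : ‖h‖ ≤ 1) (hg : ‖g‖ ≤ 1)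
    (a b : Fin n) (X : ES (Fin k) →L[ℂ] ES (Fin k')) (φ : ES (Fin k × Fin k)) :
    ‖(tensorCLM (hat h) (hat g)) (embedPair a b ((tensorCLM (Vij V a b) X) φ))‖
      ≤ ‖(tensorCLM (ContinuousLinearMap.id ℂ (ES (Fin k))) X) φ‖ := by
  have e1 : (tensorCLM (hat h) (hat g)) (embedPair a b ((tensorCLM (Vij V a b) X) φ))
      = ((tensorCLM ((proj a).comp h) ((proj b).comp g)).comp
          (tensorCLM (Vij V a b) (ContinuousLinearMap.id ℂ (ES (Fin k')))))
          ((tensorCLM (ContinuousLinearMap.id ℂ (ES (Fin k))) X) φ) := by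
    have h2 : tensorCLM (Vij V a b) X
        = (tensorCLM (Vij V a b) (ContinuousLinearMap.id ℂ (ES (Fin k')))).comp
            (tensorCLM (ContinuousLinearMap.id ℂ (ES (Fin k))) X) := by
      rw [← tensorCLM_comp, (Vij V a b).comp_id, X.id_comp]
    rw [h2, ← hatcomp]
    rfl
  rw [e1]
  have hM : ‖(tensorCLM ((proj a).comp h) ((proj b).comp g)).comp
      (tensorCLM (Vij V a b) (ContinuousLinearMap.id ℂ (ES (Fin k'))))‖ ≤ 1 := by
    refine comp_norm_le_one (tensor_norm_le_one ?_ ?_) (tensor_norm_le_one ?_ ?_)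
    · exact comp_norm_le_one (norm_proj_le a) hh
    · exact comp_norm_le_one (norm_proj_le b) hg
    · exact le_trans (norm_Vij_le V a b) hV
    · exact ContinuousLinearMap.norm_id_le
  refine le_trans (ContinuousLinearMap.le_opNorm _ _) ?_
  nlinarith [norm_nonneg ((tensorCLM (ContinuousLinearMap.id ℂ (ES (Fin k))) X) φ),
    ContinuousLinearMap.opNorm_nonneg ((tensorCLM ((proj a).comp h) ((proj b).comp g)).comp
      (tensorCLM (Vij V a b) (ContinuousLinearMap.id ℂ (ES (Fin k')))))]

lemma sgn_norm (b : Bool) : ‖sgn b‖ = 1 := by cases b <;> simp [sgn]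

lemma sgn_not (b : Bool) : sgn (!b) = - sgn b := by cases b <;> simp [sgn]

lemma key {n k k' r : ℕ} (hn : 2 ≤ n) (S : PureStrategy n k k' r) (ε : (Fin n × Fin n) → Bool)
    (p : Fin n × Fin n) :
    Nnorm ((2 : ℂ)⁻¹ • (PhiII S ε - PhiII S (flipAt ε p)))
      ≤ (1/2) * ‖(tensorCLM (ContinuousLinearMap.id ℂ (ES (Fin k)))
            (S.W ε - S.W (flipAt ε p))) S.φ‖ + ((n:ℝ)^2)⁻¹ := by
  have hn0 : (0:ℝ) < (n:ℝ) := by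
    have : (0:ℕ) < n := by omega
    exact_mod_cast this
  set ε' := flipAt ε p with hε'
  set B := ‖(tensorCLM (ContinuousLinearMap.id ℂ (ES (Fin k))) (S.W ε - S.W ε')) S.φ‖ with hBdef
  have hB : 0 ≤ B := norm_nonneg _
  refine Real.sSup_le ?_ (by positivity)
  rintro s ⟨r', h, g, hh, hg, rfl⟩
  set T := tensorCLM (hat h) (hat g) with hT
  set u : Fin n × Fin n → ((Fin n × Fin n) → Bool) → ES ((Fin n × Fin k') × (Fin n × Fin k')) :=
    fun ab η => embedPair ab.1 ab.2 ((tensorCLM (Vij S.V ab.1 ab.2) (S.W η)) S.φ) with hu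
  have hTφ : T ((2 : ℂ)⁻¹ • (PhiII S ε - PhiII S ε'))
      = (2:ℂ)⁻¹ • (((n:ℂ)^2)⁻¹ • ∑ ab : Fin n × Fin n,
          (sgn (ε ab) • T (u ab ε) - sgn (ε' ab) • T (u ab ε'))) := by
    rw [map_smul]
    congr 1
    rw [map_sub]
    simp only [PhiII, map_smul, map_sum]
    rw [← smul_sub, ← Finset.sum_sub_distrib]
  -- per-term bound
  have hterm : ∀ ab : Fin n × Fin n,
      ‖sgn (ε ab) • T (u ab ε) - sgn (ε' ab) • T (u ab ε')‖
        ≤ B + (if ab = p then 2 else 0) := by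
    intro ab
    have hone : ∀ η, ‖T (u ab η)‖ ≤ 1 := by
      intro η
      refine le_trans (core S.V S.hV h g hh hg ab.1 ab.2 (S.W η) S.φ) ?_
      refine le_trans (ContinuousLinearMap.le_opNorm _ _) ?_
      rw [S.hφ, mul_one]
      exact tensor_norm_le_one ContinuousLinearMap.norm_id_le (S.hW η)
    by_cases hab : ab = p
    · subst hab
      have hflip : ε' ab = !(ε ab) := Function.update_self _ _ _
      rw [if_pos rfl, hflip, sgn_not, neg_smul, sub_neg_eq_add, ← smul_add, norm_smul,
        sgn_norm, one_mul]
      refine le_trans (norm_add_le _ _) ?_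
      have := hone ε
      have := hone ε'
      linarith
    · have hflip : ε' ab = ε ab := Function.update_of_ne hab _ _
      rw [if_neg hab, hflip, ← smul_sub, norm_smul, sgn_norm, one_mul, add_zero]
      have hdiff : T (u ab ε) - T (u ab ε')
          = T (embedPair ab.1 ab.2 ((tensorCLM (Vij S.V ab.1 ab.2) (S.W ε - S.W ε')) S.φ)) := by
        rw [← map_sub, hu]
        simp only
        rw [← map_sub, tensorCLM_sub_right, ContinuousLinearMap.sub_apply]
      rw [hdiff]
      exact core S.V S.hV h g hh hg ab.1 ab.2 (S.W ε - S.W ε') S.φ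
  have hsum : ‖∑ ab : Fin n × Fin n,
      (sgn (ε ab) • T (u ab ε) - sgn (ε' ab) • T (u ab ε'))‖ ≤ (n:ℝ)^2 * B + 2 := by
    refine le_trans (norm_sum_le _ _) ?_
    refine le_trans (Finset.sum_le_sum fun ab _ => hterm ab) ?_
    rw [Finset.sum_add_distrib, Finset.sum_const, Finset.sum_ite_eq' Finset.univ p (fun _ => (2:ℝ))]
    simp [mul_comm]
    nlinarith [sq_nonneg ((n:ℝ))]
  rw [hTφ, norm_smul, norm_smul]
  have h2 : ‖(2:ℂ)⁻¹‖ = (1/2 : ℝ) := by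
    rw [norm_inv]; norm_num
  have hnc : ‖((n:ℂ)^2)⁻¹‖ = ((n:ℝ)^2)⁻¹ := by
    rw [norm_inv, norm_pow, Complex.norm_natCast]
  rw [h2, hnc]
  have := hsum
  have hfin : (1/2:ℝ) * (((n:ℝ)^2)⁻¹ * ((n:ℝ)^2 * B + 2)) = (1/2) * B + ((n:ℝ)^2)⁻¹ := by
    field_simp
  calc (1/2:ℝ) * (((n:ℝ)^2)⁻¹ * ‖∑ ab : Fin n × Fin n,
        (sgn (ε ab) • T (u ab ε) - sgn (ε' ab) • T (u ab ε'))‖)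
      ≤ (1/2:ℝ) * (((n:ℝ)^2)⁻¹ * ((n:ℝ)^2 * B + 2)) := by
        have hpos : (0:ℝ) ≤ ((n:ℝ)^2)⁻¹ := by positivity
        have := mul_le_mul_of_nonneg_left hsum hpos
        linarith
    _ = (1/2) * B + ((n:ℝ)^2)⁻¹ := hfin

lemma Nnorm_nonneg {n k' : ℕ} (t : ES ((Fin n × Fin k') × (Fin n × Fin k'))) :
    0 ≤ Nnorm t := by
  refine Real.sSup_nonneg ?_
  rintro s ⟨r', h, g, hh, hg, rfl⟩
  exact norm_nonneg _


end Helpers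

/-- there is a universal constant `C > 0` such that for every pure strategy
`S` for `G_Rad^{(n)}` and every sign matrix `ε`:
`(Σ_{ij} N(∂_{ij}Φ^{ii}_S(ε))²)^{1/2}
  ≤ (Σ_{ij} (1/4)·‖(Id ⊗ (W_ε − W_{ε̄^{ij}}))φ‖²)^{1/2} + C/n`. -/
theorem statement15 :
    ∃ C : ℝ, 0 < C ∧
      ∀ (n k k' r : ℕ), 2 ≤ n → 1 ≤ k → 1 ≤ k' → 1 ≤ r →
        ∀ (S : PureStrategy n k k' r) (ε : (Fin n × Fin n) → Bool),
          Real.sqrt (∑ ij : Fin n × Fin n,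
              Nnorm ((2 : ℂ)⁻¹ • (PhiII S ε - PhiII S (flipAt ε ij))) ^ 2)
            ≤ Real.sqrt (∑ ij : Fin n × Fin n,
                (1 / 4 : ℝ) * ‖(tensorCLM (ContinuousLinearMap.id ℂ (ES (Fin k)))
                    (S.W ε - S.W (flipAt ε ij))) S.φ‖ ^ 2)
              + C / n := by

  refine ⟨1, one_pos, ?_⟩
  intro n k k' r hn hk hk' hr S ε
  have hn0 : (0:ℝ) < (n:ℝ) := by
    have : (0:ℕ) < n := by omega
    exact_mod_cast this
  set c : ℝ := ((n:ℝ)^2)⁻¹ with hc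
  have hc0 : (0:ℝ) ≤ c := by positivity
  set b : Fin n × Fin n → ℝ := fun p =>
    (1/2) * ‖(tensorCLM (ContinuousLinearMap.id ℂ (ES (Fin k)))
      (S.W ε - S.W (flipAt ε p))) S.φ‖ with hb
  have hb0 : ∀ p, 0 ≤ b p := fun p => by positivity
  have hkey : ∀ p, Nnorm ((2:ℂ)⁻¹ • (PhiII S ε - PhiII S (flipAt ε p))) ≤ b p + c :=
    fun p => key hn S ε p
  have h1 : ∑ p : Fin n × Fin n, Nnorm ((2:ℂ)⁻¹ • (PhiII S ε - PhiII S (flipAt ε p))) ^ 2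
      ≤ ∑ p : Fin n × Fin n, (b p + c) ^ 2 :=
    Finset.sum_le_sum fun p _ => pow_le_pow_left₀ (Nnorm_nonneg _) (hkey p) 2
  set xv : EuclideanSpace ℝ (Fin n × Fin n) := (WithLp.equiv 2 _).symm b with hxv
  set yv : EuclideanSpace ℝ (Fin n × Fin n) := (WithLp.equiv 2 _).symm (fun _ => c) with hyv
  have hxyn : Real.sqrt (∑ p : Fin n × Fin n, (b p + c) ^ 2) = ‖xv + yv‖ := by
    rw [EuclideanSpace.norm_eq]
    congr 1
    refine Finset.sum_congr rfl fun p _ => ?_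
    have : (xv + yv) p = b p + c := by
      simp [hxv, hyv]
    rw [this, Real.norm_eq_abs, sq_abs]
  have hxn : ‖xv‖ = Real.sqrt (∑ p : Fin n × Fin n, (b p) ^ 2) := by
    rw [EuclideanSpace.norm_eq]
    congr 1
    refine Finset.sum_congr rfl fun p _ => ?_
    have : xv p = b p := by simp [hxv]
    rw [this, Real.norm_eq_abs, sq_abs]
  have hyn : ‖yv‖ = (n:ℝ)⁻¹ := by
    rw [EuclideanSpace.norm_eq]
    have hcoord : ∀ p : Fin n × Fin n, ‖yv p‖ ^ 2 = c ^ 2 := by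
      intro p
      have : yv p = c := by simp [hyv]
      rw [this, Real.norm_eq_abs, sq_abs]
    rw [Finset.sum_congr rfl fun p _ => hcoord p]
    rw [Finset.sum_const]
    have hcard : (Finset.univ : Finset (Fin n × Fin n)).card = n * n := by
      simp
    rw [hcard]
    have : (n * n : ℕ) • c ^ 2 = ((n:ℝ)⁻¹) ^ 2 := by
      rw [nsmul_eq_mul, hc]
      push_cast
      field_simp
    rw [this, Real.sqrt_sq (by positivity)]
  have hbsq : ∑ p : Fin n × Fin n, (b p) ^ 2
      = ∑ p : Fin n × Fin n, (1 / 4 : ℝ) * ‖(tensorCLM (ContinuousLinearMap.id ℂ (ES (Fin k)))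
          (S.W ε - S.W (flipAt ε p))) S.φ‖ ^ 2 := by
    refine Finset.sum_congr rfl fun p _ => ?_
    rw [hb]
    ring
  calc Real.sqrt (∑ p : Fin n × Fin n,
        Nnorm ((2:ℂ)⁻¹ • (PhiII S ε - PhiII S (flipAt ε p))) ^ 2)
      ≤ Real.sqrt (∑ p : Fin n × Fin n, (b p + c) ^ 2) := Real.sqrt_le_sqrt h1
    _ = ‖xv + yv‖ := hxyn
    _ ≤ ‖xv‖ + ‖yv‖ := norm_add_le _ _
    _ = Real.sqrt (∑ p : Fin n × Fin n, (b p) ^ 2) + (n:ℝ)⁻¹ := by rw [hxn, hyn]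
    _ = Real.sqrt (∑ p : Fin n × Fin n, (1 / 4 : ℝ) * ‖(tensorCLM (ContinuousLinearMap.id ℂ
          (ES (Fin k))) (S.W ε - S.W (flipAt ε p))) S.φ‖ ^ 2) + 1 / n := by
        rw [hbsq]
        norm_num


end
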